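/- Let R be a nontrivial commutative ring and q ≥ 2 an integer. Then the q-th power map defines an endomorphism of the additive group scheme G_a over R — that is, (x + y)^q = x^q + y^q holds for all elements x, y of every commutative R-algebra B — if and only if there exist a prime number p and an integer n ≥ 1 such that q = p^n and p·1 = 0 in R. -/

import Mathlib

universe u

/-- Lucas-type fact: if `p` is prime, `q ≠ 0`, `a = v_p(q)`, then `p ∤ C(q, p^a)`. -/
lemma aux_not_dvd_choose_ord_proj {p q : ℕ} (hp : p.Prime) (hq : q ≠ 0) :
    ¬ p ∣ q.choose (p ^ (q.factorization p)) := by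
  haveI : Fact p.Prime := ⟨hp⟩
  set a := q.factorization p with ha
  intro hdvd
  have key := Choose.choose_modEq_choose_mul_prod_range_choose (n := q) (k := p ^ a) (p := p) a
  have hprod : ∀ i ∈ Finset.range a,
      (q / p ^ i % p).choose (p ^ a / p ^ i % p) = 1 := by
    intro i hi
    rw [Finset.mem_range] at hi
    have : p ^ a / p ^ i = p ^ (a - i) := by
      rw [Nat.pow_div hi.le hp.pos]
    rw [this, Nat.pow_mod, Nat.mod_self, Nat.zero_pow (by omega), Nat.zero_mod,
      Nat.choose_zero_right]
  rw [Finset.prod_congr rfl hprod, Finset.prod_const_one,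
    Nat.div_self (pow_pos hp.pos a)] at key
  have hC : ((q.choose (p ^ a) : ℤ)) ≡ ((q / p ^ a : ℕ) : ℤ) [ZMOD p] := by
    simpa [Nat.choose_one_right] using key
  have h0 : ((q.choose (p ^ a) : ℤ)) ≡ 0 [ZMOD p] :=
    (Int.modEq_zero_iff_dvd).mpr (Int.natCast_dvd_natCast.mpr hdvd)
  have : (p : ℤ) ∣ ((q / p ^ a : ℕ) : ℤ) := Int.modEq_zero_iff_dvd.mp (hC.symm.trans h0)
  exact Nat.not_dvd_ordCompl hp hq (Int.natCast_dvd_natCast.mp this)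

theorem qth_power_additive_iff_prime_power_char
    (R : Type u) [CommRing R] [Nontrivial R] (q : ℕ) (hq : 2 ≤ q) :
    (∀ (B : Type u) [CommRing B] [Algebra R B] (x y : B), (x + y) ^ q = x ^ q + y ^ q) ↔
      ∃ (p n : ℕ), p.Prime ∧ 1 ≤ n ∧ q = p ^ n ∧ (p : R) = 0 := by
  constructor
  · intro h
    -- extract vanishing of binomial coefficients in R
    have hbin : ∀ i, 0 < i → i < q → ((q.choose i : R) = 0) := by
      intro i hi0 hiq
      have := h (Polynomial R) Polynomial.X 1
      have hco := congrArg (fun f => Polynomial.coeff f i) this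
      simp only [one_pow] at hco
      rw [Polynomial.coeff_X_add_one_pow, Polynomial.coeff_add, Polynomial.coeff_X_pow,
        Polynomial.coeff_one] at hco
      simpa [Nat.ne_of_lt hiq, hi0.ne'] using hco
    set c := ringChar R with hc
    have hcdvd : ∀ i, 0 < i → i < q → c ∣ q.choose i := by
      intro i h1 h2
      exact (ringChar.spec R _).mp (hbin i h1 h2)
    have hcq : c ∣ q := by
      have := hcdvd 1 one_pos (by omega)
      simpa using this
    have hc1 : c ≠ 1 := CharP.ringChar_ne_one
    have hc0 : c ≠ 0 := by
      rintro h0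
      rw [h0] at hcq
      omega
    set p := c.minFac with hpdef
    have hp : p.Prime := Nat.minFac_prime hc1
    have hpc : p ∣ c := Nat.minFac_dvd c
    have hpq : p ∣ q := hpc.trans hcq
    set a := q.factorization p with hadef
    have hq0 : q ≠ 0 := by omega
    have ha1 : 1 ≤ a := hp.factorization_pos_of_dvd hq0 hpq
    have hpaq : p ^ a ∣ q := Nat.ordProj_dvd q p
    -- q = p ^ a
    have hqpa : q = p ^ a := by
      by_contra hne
      have hlt : p ^ a < q := lt_of_le_of_ne (Nat.le_of_dvd (by omega) hpaq) (Ne.symm hne)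
      have hpos : 0 < p ^ a := pow_pos hp.pos a
      have : p ∣ q.choose (p ^ a) := hpc.trans (hcdvd _ hpos hlt)
      exact aux_not_dvd_choose_ord_proj hp hq0 this
    -- c = p
    have hcp : c = p := by
      obtain ⟨t, ht, hct⟩ := (Nat.dvd_prime_pow hp).mp (hqpa ▸ hcq)
      have ht1 : 1 ≤ t := by
        rcases Nat.eq_zero_or_pos t with h0 | h1
        · exfalso; apply hc1; rw [hct, h0, pow_zero]
        · exact h1
      have ht2 : t ≤ 1 := by
        by_contra hgt
        push_neg at hgt
        -- p^2 ∣ c ∣ C(p^a, p^(a-1)), but v_p of that choose is 1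
        have hmid : 0 < p ^ (a - 1) ∧ p ^ (a - 1) < q := by
          constructor
          · exact pow_pos hp.pos _
          · rw [hqpa]
            exact Nat.pow_lt_pow_right hp.one_lt (by omega)
        have hdvd2 : p ^ 2 ∣ q.choose (p ^ (a - 1)) := by
          calc p ^ 2 ∣ p ^ t := pow_dvd_pow p hgt
            _ = c := hct.symm
            _ ∣ _ := hcdvd _ hmid.1 hmid.2
        have hkle : p ^ (a - 1) ≤ p ^ a := Nat.pow_le_pow_right hp.pos (by omega)
        have hEm : emultiplicity p ((p ^ a).choose (p ^ (a - 1))) = ((a - (a - 1) : ℕ) : ℕ∞) := by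
          rw [Nat.Prime.emultiplicity_choose_prime_pow hp hkle (pow_pos hp.pos _).ne']
          congr 1
          rw [multiplicity_pow_self hp.pos.ne' hp.prime.not_isUnit]
        have : (2 : ℕ∞) ≤ emultiplicity p ((p ^ a).choose (p ^ (a - 1))) := by
          apply le_emultiplicity_of_pow_dvd
          rw [← hqpa]; exact hdvd2
        rw [hEm] at this
        have : (2 : ℕ) ≤ a - (a - 1) := by exact_mod_cast this
        omega
      have : t = 1 := le_antisymm ht2 ht1
      rw [hct, this, pow_one]
    refine ⟨p, a, hp, ha1, hqpa, ?_⟩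
    rw [← hcp]
    exact ringChar.spec R c |>.mpr dvd_rfl
  · rintro ⟨p, n, hp, hn, rfl, hpR⟩
    intro B _ _ x y
    haveI : Fact p.Prime := ⟨hp⟩
    have hpB : (p : B) = 0 := by
      have h1 : ((p : ℕ) : B) = algebraMap R B ((p : ℕ) : R) := (map_natCast (algebraMap R B) p).symm
      rw [hpR, map_zero] at h1
      exact h1
    rcases subsingleton_or_nontrivial B with hB | hB
    · exact Subsingleton.elim _ _
    · have hchar : ringChar B = p := by
        have hdvd : ringChar B ∣ p := (ringChar.spec B p).mp hpB
        rcases (Nat.dvd_prime hp).mp hdvd with h1 | h2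
        · exact absurd h1 CharP.ringChar_ne_one
        · exact h2
      haveI : CharP B p := hchar ▸ ringChar.charP B
      exact add_pow_char_pow x y p n
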